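/- arXiv:2605.09901 — 2 statements merged into one kernel-verified Lean document; each statement's English description precedes it below -/
import Mathlib

section
/- Let Ω ⊆ 𝕆 be a domain and suppose (z, I₁) and (z, I₂) are CCL-equivalent in Ω̂ (i.e., τ_{I₁}(z) and τ_{I₂}(z) are CCL-equivalent in Ω). Then there exists δ > 0 such that (z', I₁) and (z', I₂) are CCL-equivalent for every complex number z' with |z' - z| < δ. -/
noncomputable section

/-- The octonions, realized as the Cayley–Dickson double of the quaternions. -/
@[ext] structure Octonion : Type where
  a : Quaternion ℝ
  b : Quaternion ℝ

notation "𝕆" => Octonion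

namespace Octonion

instance : Zero 𝕆 := ⟨⟨0, 0⟩⟩
instance : One 𝕆 := ⟨⟨1, 0⟩⟩
instance : Add 𝕆 := ⟨fun x y => ⟨x.a + y.a, x.b + y.b⟩⟩
instance : Neg 𝕆 := ⟨fun x => ⟨-x.a, -x.b⟩⟩
instance : Sub 𝕆 := ⟨fun x y => ⟨x.a - y.a, x.b - y.b⟩⟩
/-- Cayley–Dickson multiplication. -/
instance : Mul 𝕆 := ⟨fun x y => ⟨x.a * y.a - star y.b * x.b, y.b * x.a + x.b * star y.a⟩⟩
instance : SMul ℝ 𝕆 := ⟨fun r x => ⟨r • x.a, r • x.b⟩⟩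
instance : SMul ℕ 𝕆 := ⟨fun n x => ⟨n • x.a, n • x.b⟩⟩
instance : SMul ℤ 𝕆 := ⟨fun n x => ⟨n • x.a, n • x.b⟩⟩

def toProd (x : 𝕆) : Quaternion ℝ × Quaternion ℝ := (x.a, x.b)

lemma toProd_injective : Function.Injective toProd := by
  intro x y h
  cases x; cases y
  simpa [toProd, Prod.ext_iff, Octonion.mk.injEq] using h

instance : AddCommGroup 𝕆 :=
  Function.Injective.addCommGroup toProd toProd_injective rfl (fun _ _ => rfl) (fun _ => rfl)
    (fun _ _ => rfl) (fun _ _ => rfl) (fun _ _ => rfl)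

def toProdHom : 𝕆 →+ Quaternion ℝ × Quaternion ℝ :=
  { toFun := toProd, map_zero' := rfl, map_add' := fun _ _ => rfl }

instance : Module ℝ 𝕆 :=
  Function.Injective.module ℝ toProdHom toProd_injective (fun _ _ => rfl)

def toProdLin : 𝕆 →ₗ[ℝ] Quaternion ℝ × Quaternion ℝ :=
  { toFun := toProd, map_add' := fun _ _ => rfl, map_smul' := fun _ _ => rfl }

instance : NormedAddCommGroup 𝕆 := NormedAddCommGroup.induced 𝕆 _ toProdHom toProd_injective
instance : NormedSpace ℝ 𝕆 := NormedSpace.induced ℝ 𝕆 _ toProdLin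

/-- Octonionic conjugation. -/
def conj (x : 𝕆) : 𝕆 := ⟨star x.a, -x.b⟩

/-- The real part of an octonion. -/
def re (x : 𝕆) : ℝ := x.a.re

/-- The imaginary part of an octonion. -/
def im (x : 𝕆) : 𝕆 := ⟨x.a.im, x.b⟩

/-- The squared (Euclidean) norm of an octonion. -/
def normSq (x : 𝕆) : ℝ := Quaternion.normSq x.a + Quaternion.normSq x.b

/-- The (Euclidean) norm of an octonion. -/
def onorm (x : 𝕆) : ℝ := Real.sqrt (normSq x)

instance : Inv 𝕆 := ⟨fun x => (normSq x)⁻¹ • conj x⟩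

/-- The sphere of imaginary units of `𝕆`. -/
def sph : Set 𝕆 := {I | onorm I = 1 ∧ re I = 0}

/-- `tau I (α + β i) = α + β I`. -/
def tau (I : 𝕆) (z : ℂ) : 𝕆 := z.re • (1 : 𝕆) + z.im • I

end Octonion

namespace Octonion

/-- `γ` and `Θ` define a circular lifting `t ↦ τ_{Θ t}(γ t)`: `γ` is a continuous path in `ℂ`
(the base) and `Θ` a continuous path in the sphere of imaginary units (the spherical
coordinate). -/
def IsCircularLifting (γ : unitInterval → ℂ) (Θ : unitInterval → 𝕆) : Prop :=
  Continuous γ ∧ Continuous Θ ∧ ∀ t, Θ t ∈ sph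

/-- `x` and `x'` are CCL-connected in `Ω`: they are the terminal points of a pair of coupled
circular liftings contained in `Ω` (common base, same initial spherical coordinate). -/
def CCLConnected (Ω : Set 𝕆) (x x' : 𝕆) : Prop :=
  ∃ γ Θ₁ Θ₂, IsCircularLifting γ Θ₁ ∧ IsCircularLifting γ Θ₂ ∧ Θ₁ 0 = Θ₂ 0 ∧
    (∀ t, tau (Θ₁ t) (γ t) ∈ Ω) ∧ (∀ t, tau (Θ₂ t) (γ t) ∈ Ω) ∧
    tau (Θ₁ 1) (γ 1) = x ∧ tau (Θ₂ 1) (γ 1) = x'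

/-- CCL-equivalence in `Ω`: the equivalence closure of CCL-connectedness (finite chains). -/
def CCLEquiv (Ω : Set 𝕆) : 𝕆 → 𝕆 → Prop := Relation.EqvGen (CCLConnected Ω)

end Octonion

namespace Octonion

/-- The disjoint union `Ω̂` of the complex slices of `Ω`, topologized as a disjoint union
(a set is open iff it is a union `⋃_I O^I × {I}` with each `O^I` open in `Ω^I`). -/
abbrev OHat (Ω : Set 𝕆) : Type := Σ I : sph, {z : ℂ // tau I.1 z ∈ Ω}

/-- The CCL equivalence relation on `Ω̂`: `(z,I) ≃ (z',I')` iff `z = z'` and `τ_I z`,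
`τ_{I'} z'` are CCL-equivalent in `Ω`. -/
def ohatSetoid (Ω : Set 𝕆) : Setoid (OHat Ω) where
  r p q := p.2.1 = q.2.1 ∧ CCLEquiv Ω (tau p.1.1 p.2.1) (tau q.1.1 q.2.1)
  iseqv := ⟨fun p => ⟨rfl, Relation.EqvGen.refl _⟩,
    fun h => ⟨h.1.symm, Relation.EqvGen.symm _ _ h.2⟩,
    fun h h' => ⟨h.1.trans h'.1, Relation.EqvGen.trans _ _ _ h.2 h'.2⟩⟩

/-- The quotient `D_Ω` of `Ω̂` by CCL equivalence, with the quotient topology. -/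
abbrev DOmega (Ω : Set 𝕆) : Type := Quotient (ohatSetoid Ω)

end Octonion
namespace Octonion

@[simp] lemma a_add (x y : 𝕆) : (x + y).a = x.a + y.a := rfl
@[simp] lemma b_add (x y : 𝕆) : (x + y).b = x.b + y.b := rfl
@[simp] lemma a_smul (r : ℝ) (x : 𝕆) : (r • x).a = r • x.a := rfl
@[simp] lemma b_smul (r : ℝ) (x : 𝕆) : (r • x).b = r • x.b := rfl
@[simp] lemma a_one : (1 : 𝕆).a = 1 := rfl
@[simp] lemma b_one : (1 : 𝕆).b = 0 := rfl
@[simp] lemma a_zero : (0 : 𝕆).a = 0 := rfl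
@[simp] lemma b_zero : (0 : 𝕆).b = 0 := rfl
@[simp] lemma a_neg (x : 𝕆) : (-x).a = -x.a := rfl
@[simp] lemma b_neg (x : 𝕆) : (-x).b = -x.b := rfl

@[simp] lemma re_add (x y : 𝕆) : re (x + y) = re x + re y := by simp [re]
@[simp] lemma re_smul (r : ℝ) (x : 𝕆) : re (r • x) = r * re x := by simp [re]
@[simp] lemma re_one : re (1 : 𝕆) = 1 := by simp [re, Quaternion.re_one]
@[simp] lemma im_add (x y : 𝕆) : im (x + y) = im x + im y := by
  ext <;> simp [im]
@[simp] lemma im_smul (r : ℝ) (x : 𝕆) : im (r • x) = r • im x := by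
  ext <;> simp [im]
@[simp] lemma im_one : im (1 : 𝕆) = 0 := by ext <;> simp [im, Quaternion.re_zero, Quaternion.imI_zero, Quaternion.imJ_zero, Quaternion.imK_zero, Quaternion.re_one, Quaternion.imI_one, Quaternion.imJ_one, Quaternion.imK_one]
lemma im_of_re_zero {x : 𝕆} (h : re x = 0) : im x = x := by
  have : x.a.im = x.a := by ext <;> simp [re] at h ⊢; exact h.symm
  ext <;> simp [im, this]
@[simp] lemma re_im (x : 𝕆) : re (im x) = 0 := by simp [im, re]
lemma re_add_im (x : 𝕆) : re x • (1 : 𝕆) + im x = x := by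
  ext <;> simp [re, im, Quaternion.re_one, Quaternion.imI_one, Quaternion.imJ_one, Quaternion.imK_one] <;> ext <;> simp

lemma onorm_nonneg (x : 𝕆) : 0 ≤ onorm x := Real.sqrt_nonneg _
lemma normSq_nonneg (x : 𝕆) : 0 ≤ normSq x :=
  add_nonneg (Quaternion.normSq_nonneg) (Quaternion.normSq_nonneg)
lemma normSq_eq_zero {x : 𝕆} : normSq x = 0 ↔ x = 0 := by
  constructor
  · intro h
    unfold normSq at h
    have ha : x.a = 0 := Quaternion.normSq_eq_zero.mp (by
      nlinarith [Quaternion.normSq_nonneg (a := x.a), Quaternion.normSq_nonneg (a := x.b)])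
    have hb : x.b = 0 := Quaternion.normSq_eq_zero.mp (by
      nlinarith [Quaternion.normSq_nonneg (a := x.a), Quaternion.normSq_nonneg (a := x.b)])
    ext <;> simp [ha, hb]
  · rintro rfl; simp [normSq]
lemma onorm_eq_zero {x : 𝕆} : onorm x = 0 ↔ x = 0 := by
  rw [onorm, Real.sqrt_eq_zero (normSq_nonneg x), normSq_eq_zero]
lemma normSq_smul (r : ℝ) (x : 𝕆) : normSq (r • x) = r ^ 2 * normSq x := by
  simp [normSq, Quaternion.normSq_def', Quaternion.re_smul]
  ring
lemma onorm_smul (r : ℝ) (x : 𝕆) : onorm (r • x) = |r| * onorm x := by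
  rw [onorm, normSq_smul, Real.sqrt_mul (sq_nonneg r), Real.sqrt_sq_eq_abs, onorm]

lemma tau_def (I : 𝕆) (z : ℂ) : tau I z = z.re • 1 + z.im • I := rfl
lemma re_tau {I : 𝕆} (h : re I = 0) (z : ℂ) : re (tau I z) = z.re := by
  simp [tau_def, h]
lemma im_tau {I : 𝕆} (h : re I = 0) (z : ℂ) : im (tau I z) = z.im • I := by
  simp [tau_def, im_of_re_zero h]
lemma tau_of_im_zero (I : 𝕆) {z : ℂ} (h : z.im = 0) : tau I z = z.re • 1 := by
  simp [tau_def, h]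
lemma onorm_im_tau {I : 𝕆} (h : I ∈ sph) (z : ℂ) : onorm (im (tau I z)) = |z.im| := by
  rw [im_tau h.2, onorm_smul, h.1, mul_one]
lemma continuous_tau (I : 𝕆) : Continuous fun z : ℂ => tau I z := by
  exact ((Complex.continuous_re.smul continuous_const).add
    (Complex.continuous_im.smul continuous_const))

end Octonion
namespace Octonion

lemma isometry_toProd : Isometry toProd := fun _ _ => rfl
lemma continuous_a : Continuous fun x : 𝕆 => x.a :=
  continuous_fst.comp isometry_toProd.continuous
lemma continuous_b : Continuous fun x : 𝕆 => x.b :=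
  continuous_snd.comp isometry_toProd.continuous
lemma continuous_onorm : Continuous onorm := by
  have : onorm = fun x => Real.sqrt (‖x.a‖ * ‖x.a‖ + ‖x.b‖ * ‖x.b‖) := by
    funext x
    rw [onorm, normSq, Quaternion.normSq_eq_norm_mul_self, Quaternion.normSq_eq_norm_mul_self]
  rw [this]
  exact Real.continuous_sqrt.comp
    (((continuous_a.norm.mul continuous_a.norm).add (continuous_b.norm.mul continuous_b.norm)))

lemma onorm_neg (x : 𝕆) : onorm (-x) = onorm x := by
  rw [← neg_one_smul ℝ x, onorm_smul]; simp

def e1 : 𝕆 := ⟨⟨0, 1, 0, 0⟩, 0⟩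
def e2 : 𝕆 := ⟨⟨0, 0, 1, 0⟩, 0⟩

lemma e1_mem : e1 ∈ sph := by
  constructor
  · rw [onorm, normSq]
    simp [e1, Quaternion.normSq_def', Quaternion.re_zero, Quaternion.imI_zero, Quaternion.imJ_zero, Quaternion.imK_zero]
    refine (Quaternion.normSq_def' (a := (⟨0, 1, 0, 0⟩ : Quaternion ℝ))).trans ?_
    norm_num
  · rfl
lemma e2_mem : e2 ∈ sph := by
  constructor
  · rw [onorm, normSq]
    simp [e2, Quaternion.normSq_def', Quaternion.re_zero, Quaternion.imI_zero, Quaternion.imJ_zero, Quaternion.imK_zero]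
    refine (Quaternion.normSq_def' (a := (⟨0, 0, 1, 0⟩ : Quaternion ℝ))).trans ?_
    norm_num
  · rfl
lemma e1_ne_e2 : e1 ≠ e2 := by
  intro h
  have := congrArg (fun x : 𝕆 => x.a.imI) h
  simp [e1, e2] at this
lemma e2_ne_e1 : e2 ≠ e1 := fun h => e1_ne_e2 h.symm
lemma e2_ne_neg_e1 : e2 ≠ -e1 := by
  intro h
  have := congrArg (fun x : 𝕆 => x.a.imJ) h
  simp [e1, e2, Quaternion.imJ_neg] at this
  change (1 : ℝ) = -(0 : ℝ) at this
  norm_num at this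

lemma sph_path_nonantipodal {I J : 𝕆} (hI : I ∈ sph) (hJ : J ∈ sph) (hIJ : I + J ≠ 0) :
    ∃ P : Path I J, ∀ t, P t ∈ sph := by
  set c : unitInterval → 𝕆 := fun t => (1 - (t : ℝ)) • I + (t : ℝ) • J with hc
  have hcne : ∀ t, c t ≠ 0 := by
    intro t ht
    have h1 : (1 - (t : ℝ)) • I = -((t : ℝ) • J) := by
      rw [eq_neg_iff_add_eq_zero]; exact ht
    have h2 : |1 - (t : ℝ)| = |(t : ℝ)| := by
      have := congrArg onorm h1
      rwa [onorm_neg, onorm_smul, onorm_smul, hI.1, hJ.1, mul_one, mul_one] at this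
    have ht0 := t.2.1
    have ht1 := t.2.2
    have : (t : ℝ) = 1 / 2 := by
      rw [abs_of_nonneg (by linarith), abs_of_nonneg ht0] at h2; linarith
    apply hIJ
    have ht' : (1 - (t : ℝ)) • I + (t : ℝ) • J = 0 := ht
    rw [this] at ht'
    have h12 : (1 : ℝ) - 1 / 2 = 1 / 2 := by norm_num
    rw [h12] at ht'
    have h3 : (1 / 2 : ℝ) • (I + J) = 0 := by rw [smul_add]; exact ht'
    simpa using smul_eq_zero.mp h3
  have hcont : Continuous c := by
    exact ((continuous_const.sub continuous_subtype_val).smul continuous_const).add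
      (continuous_subtype_val.smul continuous_const)
  have honc : Continuous fun t => onorm (c t) := continuous_onorm.comp hcont
  have honne : ∀ t, onorm (c t) ≠ 0 := fun t h => hcne t (onorm_eq_zero.mp h)
  refine ⟨⟨⟨fun t => (onorm (c t))⁻¹ • c t, (honc.inv₀ honne).smul hcont⟩, ?_, ?_⟩, ?_⟩
  · show (onorm (c 0))⁻¹ • c 0 = I
    have h0 : c 0 = I := by simp [hc]
    rw [h0, hI.1]; simp
  · show (onorm (c 1))⁻¹ • c 1 = J
    have h1 : c 1 = J := by simp [hc]
    rw [h1, hJ.1]; simp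
  · intro t
    constructor
    · show onorm ((onorm (c t))⁻¹ • c t) = 1
      rw [onorm_smul, abs_of_nonneg (inv_nonneg.mpr (onorm_nonneg _)),
        inv_mul_cancel₀ (honne t)]
    · show re ((onorm (c t))⁻¹ • c t) = 0
      rw [re_smul]
      simp [hc, hI.2, hJ.2]

lemma sph_pathconn {I J : 𝕆} (hI : I ∈ sph) (hJ : J ∈ sph) :
    ∃ P : Path I J, ∀ t, P t ∈ sph := by
  by_cases hIJ : I + J ≠ 0
  · exact sph_path_nonantipodal hI hJ hIJ
  push_neg at hIJ
  have hJI : J = -I := by rw [← neg_eq_of_add_eq_zero_right hIJ]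
  have : ∃ K, K ∈ sph ∧ K ≠ I ∧ K ≠ -I := by
    by_cases he : I = e1 ∨ I = -e1
    · rcases he with rfl | rfl
      · exact ⟨e2, e2_mem, e2_ne_e1, e2_ne_neg_e1⟩
      · refine ⟨e2, e2_mem, e2_ne_neg_e1, ?_⟩
        rw [neg_neg]; exact e2_ne_e1
    · push_neg at he
      exact ⟨e1, e1_mem, fun h => he.1 h.symm, fun h => he.2 (by rw [h, neg_neg])⟩
  obtain ⟨K, hK, hKI, hKnI⟩ := this
  obtain ⟨P1, h1⟩ := sph_path_nonantipodal hI hK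
    (fun h => hKnI (by rw [← neg_eq_of_add_eq_zero_right h]))
  obtain ⟨P2, h2⟩ := sph_path_nonantipodal hK hJ
    (fun h => hKI (by rw [hJI] at h; rw [← neg_neg I, ← neg_eq_of_add_eq_zero_left h]))
  refine ⟨P1.trans P2, fun t => ?_⟩
  rw [Path.trans_apply]
  split
  · exact h1 _
  · exact h2 _

end Octonion
namespace Octonion

variable {Ω : Set 𝕆}

lemma smul_cancel {r : ℝ} (hr : r ≠ 0) {a b : 𝕆} (h : r • a = r • b) : a = b := by
  have := congrArg (fun x => r⁻¹ • x) h
  simpa [smul_smul, inv_mul_cancel₀ hr] using this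

lemma cclConnected_of_paths {z₀ z₁ : ℂ} {J₁ J₂ A B : 𝕆}
    (γ : Path z₀ z₁) (Θ₁ : Path J₁ A) (Θ₂ : Path J₂ B) (hJ : J₁ = J₂)
    (h1 : ∀ t, Θ₁ t ∈ sph) (h2 : ∀ t, Θ₂ t ∈ sph)
    (m1 : ∀ t, tau (Θ₁ t) (γ t) ∈ Ω) (m2 : ∀ t, tau (Θ₂ t) (γ t) ∈ Ω) :
    CCLConnected Ω (tau A z₁) (tau B z₁) := by
  refine ⟨⇑γ, ⇑Θ₁, ⇑Θ₂, ⟨γ.continuous, Θ₁.continuous, h1⟩, ⟨γ.continuous, Θ₂.continuous, h2⟩,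
    ?_, m1, m2, ?_, ?_⟩
  · rw [Path.source, Path.source, hJ]
  · rw [Path.target, Path.target]
  · rw [Path.target, Path.target]

lemma cclConnected_mem {x y : 𝕆} (h : CCLConnected Ω x y) : x ∈ Ω ∧ y ∈ Ω := by
  obtain ⟨γ, Θ₁, Θ₂, _, _, _, m1, m2, e1, e2⟩ := h
  exact ⟨e1 ▸ m1 1, e2 ▸ m2 1⟩

lemma cclConnected_inv {x y : 𝕆} (h : CCLConnected Ω x y) :
    re x = re y ∧ onorm (im x) = onorm (im y) := by
  obtain ⟨γ, Θ₁, Θ₂, ⟨_, _, s1⟩, ⟨_, _, s2⟩, _, m1, m2, e1, e2⟩ := h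
  subst e1; subst e2
  constructor
  · rw [re_tau (s1 1).2, re_tau (s2 1).2]
  · rw [onorm_im_tau (s1 1), onorm_im_tau (s2 1)]

lemma cclEquiv_mem_iff {x y : 𝕆} (h : CCLEquiv Ω x y) : x ∈ Ω ↔ y ∈ Ω := by
  induction h with
  | rel a b hab =>
    have := cclConnected_mem hab
    exact ⟨fun _ => this.2, fun _ => this.1⟩
  | refl a => exact Iff.rfl
  | symm a b _ ih => exact ih.symm
  | trans a b c _ _ ih1 ih2 => exact ih1.trans ih2

lemma cclEquiv_inv {x y : 𝕆} (h : CCLEquiv Ω x y) :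
    re x = re y ∧ onorm (im x) = onorm (im y) := by
  induction h with
  | rel a b hab => exact cclConnected_inv hab
  | refl a => exact ⟨rfl, rfl⟩
  | symm a b _ ih => exact ⟨ih.1.symm, ih.2.symm⟩
  | trans a b c _ _ ih1 ih2 => exact ⟨ih1.1.trans ih2.1, ih1.2.trans ih2.2⟩

/-- The straight segment from `w` to `w'` as a path. -/
def seg (w w' : ℂ) : Path w w' where
  toFun := fun t => w + (t : ℝ) • (w' - w)
  continuous_toFun := by
    exact continuous_const.add (continuous_subtype_val.smul continuous_const)
  source' := by simp
  target' := by simp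

lemma seg_dist (w w' : ℂ) (t : unitInterval) : dist (seg w w' t) w ≤ dist w' w := by
  have : seg w w' t - w = (t : ℝ) • (w' - w) := by simp [seg]
  rw [dist_eq_norm, this, norm_smul, dist_eq_norm]
  calc ‖(t : ℝ)‖ * ‖w' - w‖ ≤ 1 * ‖w' - w‖ := by
        apply mul_le_mul_of_nonneg_right _ (norm_nonneg _)
        rw [Real.norm_eq_abs, abs_of_nonneg t.2.1]; exact t.2.2
    _ = ‖w' - w‖ := one_mul _

/-- Multiply the imaginary part of a complex number by `ε`. -/
def mulIm (ε : ℝ) (u : ℂ) : ℂ := ⟨u.re, ε * u.im⟩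

@[simp] lemma mulIm_re (ε : ℝ) (u : ℂ) : (mulIm ε u).re = u.re := rfl
@[simp] lemma mulIm_im (ε : ℝ) (u : ℂ) : (mulIm ε u).im = ε * u.im := rfl

lemma continuous_mulIm (ε : ℝ) : Continuous (mulIm ε) := by
  have : mulIm ε = fun u => (u.re : ℂ) + ((ε * u.im : ℝ) : ℂ) * Complex.I := by
    funext u; apply Complex.ext <;> simp [mulIm]
  rw [this]
  exact (Complex.continuous_ofReal.comp Complex.continuous_re).add
    ((Complex.continuous_ofReal.comp (continuous_const.mul Complex.continuous_im)).mul
      continuous_const)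

lemma tau_smul_mulIm {I : 𝕆} {ε : ℝ} (hε : ε * ε = 1) (u : ℂ) :
    tau (ε • I) (mulIm ε u) = tau I u := by
  rw [tau_def, tau_def, mulIm_re, mulIm_im, smul_smul]
  congr 1
  rw [show ε * u.im * ε = u.im * (ε * ε) by ring, hε, mul_one]

end Octonion
namespace Octonion

variable {Ω : Set 𝕆}

lemma real_case (hΩo : IsOpen Ω) {I J : 𝕆} (hI : I ∈ sph) (hJ : J ∈ sph) {w : ℂ}
    (hw : w.im = 0) (hx : tau I w ∈ Ω) (hy : tau J w ∈ Ω) :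
    ∃ δ > 0, ∀ w', dist w' w < δ → CCLConnected Ω (tau I w') (tau J w') := by
  have hoI : IsOpen {u : ℂ | tau I u ∈ Ω} := hΩo.preimage (continuous_tau I)
  have hoJ : IsOpen {u : ℂ | tau J u ∈ Ω} := hΩo.preimage (continuous_tau J)
  obtain ⟨δ₁, hδ₁, hb₁⟩ := Metric.isOpen_iff.mp hoI w hx
  obtain ⟨δ₂, hδ₂, hb₂⟩ := Metric.isOpen_iff.mp hoJ w hy
  obtain ⟨P, hP⟩ := sph_pathconn hI hJ
  refine ⟨min δ₁ δ₂, lt_min hδ₁ hδ₂, fun w' hw' => ?_⟩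
  have hseg₁ : ∀ t, tau I (seg w w' t) ∈ Ω := fun t =>
    hb₁ (Metric.mem_ball.mpr (lt_of_le_of_lt (seg_dist w w' t)
      (lt_of_lt_of_le hw' (min_le_left _ _))))
  have hseg₂ : ∀ t, tau J (seg w w' t) ∈ Ω := fun t =>
    hb₂ (Metric.mem_ball.mpr (lt_of_le_of_lt (seg_dist w w' t)
      (lt_of_lt_of_le hw' (min_le_right _ _))))
  refine cclConnected_of_paths ((Path.refl w).trans (seg w w'))
    ((Path.refl I).trans (Path.refl I)) (P.trans (Path.refl J)) rfl ?_ ?_ ?_ ?_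
  · intro t; rw [Path.trans_apply]; split <;> (rw [Path.refl_apply]; exact hI)
  · intro t; rw [Path.trans_apply]; split
    · exact hP _
    · rw [Path.refl_apply]; exact hJ
  · intro t
    rw [Path.trans_apply, Path.trans_apply]
    split
    · rw [Path.refl_apply, Path.refl_apply]; exact hx
    · rw [Path.refl_apply]; exact hseg₁ _
  · intro t
    rw [Path.trans_apply, Path.trans_apply]
    split
    · rw [Path.refl_apply, tau_of_im_zero _ hw, ← tau_of_im_zero J hw]; exact hy
    · rw [Path.refl_apply]; exact hseg₂ _

lemma rel_case (hΩo : IsOpen Ω) {x y : 𝕆} (hcon : CCLConnected Ω x y) {I J : 𝕆}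
    (hI : I ∈ sph) (hJ : J ∈ sph) {w : ℂ} (hx : tau I w = x) (hy : tau J w = y) :
    ∃ δ > 0, ∀ w', dist w' w < δ → CCLConnected Ω (tau I w') (tau J w') := by
  by_cases hw : w.im = 0
  · exact real_case hΩo hI hJ hw (hx ▸ (cclConnected_mem hcon).1)
      (hy ▸ (cclConnected_mem hcon).2)
  obtain ⟨γ, Θ₁, Θ₂, ⟨cγ, cΘ₁, s1⟩, ⟨-, cΘ₂, s2⟩, h0, m1, m2, e1, e2⟩ := hcon
  have he1 : tau (Θ₁ 1) (γ 1) = tau I w := e1.trans hx.symm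
  have he2 : tau (Θ₂ 1) (γ 1) = tau J w := e2.trans hy.symm
  have hre : (γ 1).re = w.re := by
    have := congrArg re he1
    rwa [re_tau (s1 1).2, re_tau hI.2] at this
  have him1 : (γ 1).im • Θ₁ 1 = w.im • I := by
    have := congrArg im he1
    rwa [im_tau (s1 1).2, im_tau hI.2] at this
  have him2 : (γ 1).im • Θ₂ 1 = w.im • J := by
    have := congrArg im he2
    rwa [im_tau (s2 1).2, im_tau hJ.2] at this
  have habs : |(γ 1).im| = |w.im| := by
    have := congrArg onorm him1
    rwa [onorm_smul, onorm_smul, (s1 1).1, hI.1, mul_one, mul_one] at this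
  obtain ⟨ε, hε2, hγim⟩ : ∃ ε : ℝ, ε * ε = 1 ∧ (γ 1).im = ε * w.im := by
    rcases abs_eq_abs.mp habs with h' | h'
    exacts [⟨1, by norm_num, by simpa using h'⟩, ⟨-1, by norm_num, by simpa using h'⟩]
  have hΘ : ∀ K Θv, K ∈ sph → (γ 1).im • Θv = w.im • K → Θv = ε • K := by
    intro K Θv hKs hsm
    have h5 : ε • Θv = K := by
      apply smul_cancel hw
      rw [smul_smul, mul_comm, ← hγim]
      exact hsm
    rw [← h5, smul_smul, hε2, one_smul]
  have hΘ1 : Θ₁ 1 = ε • I := hΘ I (Θ₁ 1) hI him1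
  have hΘ2 : Θ₂ 1 = ε • J := hΘ J (Θ₂ 1) hJ him2
  -- choose δ
  have hoI : IsOpen {u : ℂ | tau I u ∈ Ω} := hΩo.preimage (continuous_tau I)
  have hoJ : IsOpen {u : ℂ | tau J u ∈ Ω} := hΩo.preimage (continuous_tau J)
  have hxΩ : tau I w ∈ Ω := by rw [hx]; exact e1 ▸ m1 1
  have hyΩ : tau J w ∈ Ω := by rw [hy]; exact e2 ▸ m2 1
  obtain ⟨δ₁, hδ₁, hb₁⟩ := Metric.isOpen_iff.mp hoI w hxΩ
  obtain ⟨δ₂, hδ₂, hb₂⟩ := Metric.isOpen_iff.mp hoJ w hyΩ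
  refine ⟨min δ₁ δ₂, lt_min hδ₁ hδ₂, fun w' hw' => ?_⟩
  have hseg₁ : ∀ t, tau I (seg w w' t) ∈ Ω := fun t =>
    hb₁ (Metric.mem_ball.mpr (lt_of_le_of_lt (seg_dist w w' t)
      (lt_of_lt_of_le hw' (min_le_left _ _))))
  have hseg₂ : ∀ t, tau J (seg w w' t) ∈ Ω := fun t =>
    hb₂ (Metric.mem_ball.mpr (lt_of_le_of_lt (seg_dist w w' t)
      (lt_of_lt_of_le hw' (min_le_right _ _))))
  -- build the paths
  have hγ1 : γ 1 = mulIm ε w := Complex.ext hre hγim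
  set γP : Path (γ 0) (γ 1) := ⟨⟨γ, cγ⟩, rfl, rfl⟩ with hγP
  set σ : Path (γ 1) (mulIm ε w') :=
    (Path.map (seg w w') (continuous_mulIm ε)).cast hγ1 rfl with hσ
  set Θ₁P : Path (Θ₁ 0) (Θ₁ 1) := ⟨⟨Θ₁, cΘ₁⟩, rfl, rfl⟩ with hΘ₁P
  set Θ₂P : Path (Θ₂ 0) (Θ₂ 1) := ⟨⟨Θ₂, cΘ₂⟩, rfl, rfl⟩ with hΘ₂P
  have key : CCLConnected Ω (tau (Θ₁ 1) (mulIm ε w')) (tau (Θ₂ 1) (mulIm ε w')) := by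
    refine cclConnected_of_paths (γP.trans σ) (Θ₁P.trans (Path.refl (Θ₁ 1)))
      (Θ₂P.trans (Path.refl (Θ₂ 1))) h0 ?_ ?_ ?_ ?_
    · intro t; rw [Path.trans_apply]; split
      · exact s1 _
      · simpa using s1 1
    · intro t; rw [Path.trans_apply]; split
      · exact s2 _
      · simpa using s2 1
    · intro t
      rw [Path.trans_apply, Path.trans_apply]
      split
      · exact m1 _
      · simp only [Path.refl_apply, hσ, Path.cast_coe, Path.map_coe, Function.comp_apply]
        rw [hΘ1, tau_smul_mulIm hε2]
        exact hseg₁ _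
    · intro t
      rw [Path.trans_apply, Path.trans_apply]
      split
      · exact m2 _
      · simp only [Path.refl_apply, hσ, Path.cast_coe, Path.map_coe, Function.comp_apply]
        rw [hΘ2, tau_smul_mulIm hε2]
        exact hseg₂ _
  rwa [hΘ1, hΘ2, tau_smul_mulIm hε2, tau_smul_mulIm hε2] at key

end Octonion
open Octonion in
/-- local infectivity of CCL equivalence: if `(z,I₁) ≃ (z,I₂)` in `Ω̂`, then
`(z',I₁) ≃ (z',I₂)` for all `z'` sufficiently close to `z`. -/
theorem stmt17 (Ω : Set 𝕆) (hΩo : IsOpen Ω) (hΩc : IsConnected Ω)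
    (z : ℂ) (I₁ I₂ : 𝕆) (hI₁ : I₁ ∈ sph) (hI₂ : I₂ ∈ sph)
    (h₁ : tau I₁ z ∈ Ω) (h₂ : tau I₂ z ∈ Ω)
    (h : CCLEquiv Ω (tau I₁ z) (tau I₂ z)) :
    ∃ δ > 0, ∀ z' : ℂ, dist z' z < δ → CCLEquiv Ω (tau I₁ z') (tau I₂ z') := by
  have key : ∀ x y : 𝕆, CCLEquiv Ω x y → x ∈ Ω → ∀ I J (w : ℂ), I ∈ sph → J ∈ sph →
      tau I w = x → tau J w = y →
      ∃ δ > 0, ∀ w' : ℂ, dist w' w < δ → CCLEquiv Ω (tau I w') (tau J w') := by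
    intro x y h
    induction h with
    | rel a b hab =>
      intro _ I J w hI hJ hxw hyw
      obtain ⟨δ, hδ, hc⟩ := rel_case hΩo hab hI hJ hxw hyw
      exact ⟨δ, hδ, fun w' hw' => Relation.EqvGen.rel _ _ (hc w' hw')⟩
    | refl a =>
      intro ha I J w hI hJ hxw hyw
      by_cases hw : w.im = 0
      · obtain ⟨δ, hδ, hc⟩ := real_case hΩo hI hJ hw (hxw ▸ ha) (hyw ▸ ha)
        exact ⟨δ, hδ, fun w' hw' => Relation.EqvGen.rel _ _ (hc w' hw')⟩
      · have hIJ : I = J := by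
          apply smul_cancel hw
          have := congrArg im (hxw.trans hyw.symm)
          rwa [im_tau hI.2, im_tau hJ.2] at this
        exact ⟨1, one_pos, fun w' _ => by rw [hIJ]; exact Relation.EqvGen.refl _⟩
    | symm a b hab ih =>
      intro hb I J w hI hJ hxw hyw
      have ha : a ∈ Ω := (cclEquiv_mem_iff hab).mpr hb
      obtain ⟨δ, hδ, hc⟩ := ih ha J I w hJ hI hyw hxw
      exact ⟨δ, hδ, fun w' hw' => Relation.EqvGen.symm _ _ (hc w' hw')⟩
    | trans a b c hab hbc ih1 ih2 =>
      intro ha I K w hI hK hxw hzw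
      have hb : b ∈ Ω := (cclEquiv_mem_iff hab).mp ha
      have hinv := cclEquiv_inv hab
      have hre : re b = w.re := by rw [← hinv.1, ← hxw, re_tau hI.2]
      by_cases hw : w.im = 0
      · have him : im b = 0 := by
          apply onorm_eq_zero.mp
          rw [← hinv.2, ← hxw, onorm_im_tau hI, hw, abs_zero]
        have hyw : tau K w = b := by
          rw [tau_of_im_zero K hw, ← re_add_im b, him, add_zero, hre]
        exact ih1 ha I K w hI hK hxw hyw
      · set J : 𝕆 := (w.im)⁻¹ • im b with hJdef
        have honb : onorm (im b) = |w.im| := by rw [← hinv.2, ← hxw, onorm_im_tau hI]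
        have hJs : J ∈ sph := by
          constructor
          · rw [hJdef, onorm_smul, honb, abs_inv, inv_mul_cancel₀ (abs_ne_zero.mpr hw)]
          · rw [hJdef, re_smul, re_im, mul_zero]
        have hyw : tau J w = b := by
          rw [tau_def, hJdef, smul_smul, mul_inv_cancel₀ hw, one_smul, ← hre, re_add_im]
        obtain ⟨δ₁, p1, f1⟩ := ih1 ha I J w hI hJs hxw hyw
        obtain ⟨δ₂, p2, f2⟩ := ih2 hb J K w hJs hK hyw hzw
        refine ⟨min δ₁ δ₂, lt_min p1 p2, fun w' hw' => ?_⟩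
        exact Relation.EqvGen.trans _ _ _
          (f1 w' (lt_of_lt_of_le hw' (min_le_left _ _)))
          (f2 w' (lt_of_lt_of_le hw' (min_le_right _ _)))
  exact key _ _ h h₁ I₁ I₂ z hI₁ hI₂ rfl rfl
end
end

section
/- Let Ω ⊆ 𝕆 be a domain and γ_Θ a circular lifting contained in Ω, with base γ : [0,1] → ℂ and spherical coordinate Θ : [0,1] → 𝕊. Then the map Γ : [0,1] → D_Ω, Γ(t) := [(γ(t), Θ(t))], is continuous and satisfies P ∘ Γ = γ; that is, Γ is a lifting of γ with respect to the local homeomorphism P : D_Ω → ℂ. -/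
noncomputable section

open Octonion in
/-- a circular lifting `γ_Θ` contained in `Ω` induces a continuous lifting
`Γ : t ↦ [(γ t, Θ t)]` of `γ` to `D_Ω` with respect to the natural projection `P`. -/
theorem stmt19 (Ω : Set 𝕆) (hΩo : IsOpen Ω) (hΩc : IsConnected Ω)
    (γ : unitInterval → ℂ) (Θ : unitInterval → 𝕆) (hγ : Continuous γ) (hΘ : Continuous Θ)
    (hsph : ∀ t, Θ t ∈ sph) (hmem : ∀ t, tau (Θ t) (γ t) ∈ Ω) :
    Continuous (fun t : unitInterval =>
        (Quotient.mk (ohatSetoid Ω) ⟨⟨Θ t, hsph t⟩, ⟨γ t, hmem t⟩⟩ : DOmega Ω)) ∧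
      ∀ P : DOmega Ω → ℂ, (∀ p : OHat Ω, P (Quotient.mk (ohatSetoid Ω) p) = p.2.1) →
        ∀ t, P (Quotient.mk (ohatSetoid Ω) ⟨⟨Θ t, hsph t⟩, ⟨γ t, hmem t⟩⟩) = γ t := by

  constructor
  · rw [continuous_iff_continuousAt]
    intro t₀
    have hF : Continuous (fun p : unitInterval × unitInterval => tau (Θ p.1) (γ p.2)) := by
      simp only [tau]
      fun_prop
    set W : Set (unitInterval × unitInterval) :=
      (fun p : unitInterval × unitInterval => tau (Θ p.1) (γ p.2)) ⁻¹' Ω with hWdef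
    have hWo : IsOpen W := hΩo.preimage hF
    have hdiag : ((t₀, t₀) : unitInterval × unitInterval) ∈ W := hmem t₀
    obtain ⟨U, V, hU, hV, hUt, hVt, hUV⟩ := isOpen_prod_iff.1 hWo t₀ t₀ hdiag
    obtain ⟨δ, hδ, hball⟩ := Metric.mem_nhds_iff.1 ((hU.inter hV).mem_nhds ⟨hUt, hVt⟩)
    have hkey : ∀ s t : unitInterval, s ∈ Metric.ball t₀ δ → t ∈ Metric.ball t₀ δ →
        tau (Θ s) (γ t) ∈ Ω := by
      intro s t hs ht
      exact hUV (Set.mk_mem_prod (hball hs).1 (hball ht).2)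
    have hmem' : ∀ t ∈ Metric.ball t₀ δ, tau (Θ t₀) (γ t) ∈ Ω :=
      fun t ht => hkey t₀ t (Metric.mem_ball_self hδ) ht
    apply ContinuousOn.continuousAt (s := Metric.ball t₀ δ) _ (Metric.ball_mem_nhds _ hδ)
    rw [continuousOn_iff_continuous_restrict]
    have heq : (Metric.ball t₀ δ).restrict (fun t : unitInterval =>
          (Quotient.mk (ohatSetoid Ω) ⟨⟨Θ t, hsph t⟩, ⟨γ t, hmem t⟩⟩ : DOmega Ω))
        = fun p : Metric.ball t₀ δ =>
          (Quotient.mk (ohatSetoid Ω) ⟨⟨Θ t₀, hsph t₀⟩, ⟨γ p.1, hmem' p.1 p.2⟩⟩ : DOmega Ω) := by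
      funext p
      obtain ⟨t, ht⟩ := p
      apply Quotient.sound
      refine ⟨rfl, Relation.EqvGen.rel _ _ ?_⟩
      -- the connecting path in the parameter interval
      have hσmem : ∀ u : unitInterval, (1 - u.1) * t₀.1 + u.1 * t.1 ∈ unitInterval := by
        intro u
        constructor
        · nlinarith [u.2.1, u.2.2, t₀.2.1, t₀.2.2, t.2.1, t.2.2]
        · nlinarith [u.2.1, u.2.2, t₀.2.1, t₀.2.2, t.2.1, t.2.2]
      set σ : unitInterval → unitInterval := fun u => ⟨(1 - u.1) * t₀.1 + u.1 * t.1, hσmem u⟩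
        with hσdef
      have hσcont : Continuous σ := by
        apply Continuous.subtype_mk
        fun_prop
      have hσball : ∀ u : unitInterval, σ u ∈ Metric.ball t₀ δ := by
        intro u
        have htd : dist t t₀ < δ := Metric.mem_ball.1 ht
        rw [Metric.mem_ball, Subtype.dist_eq, Real.dist_eq]
        have h1 : ((σ u : unitInterval) : ℝ) - t₀.1 = u.1 * (t.1 - t₀.1) := by
          simp only [hσdef]; ring
        rw [h1, abs_mul, abs_of_nonneg u.2.1]
        calc u.1 * |t.1 - t₀.1| ≤ 1 * |t.1 - t₀.1| := by
              apply mul_le_mul_of_nonneg_right u.2.2 (abs_nonneg _)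
          _ = |t.1 - t₀.1| := one_mul _
          _ < δ := by
              rw [Subtype.dist_eq, Real.dist_eq] at htd; exact htd
      have hσ0 : σ 0 = t₀ := by
        apply Subtype.ext
        simp [hσdef]
      have hσ1 : σ 1 = t := by
        apply Subtype.ext
        simp [hσdef]
      refine ⟨fun _ => γ t, fun u => Θ (σ u), fun _ => Θ t₀, ?_, ?_, ?_, ?_, ?_, ?_, ?_⟩
      · exact ⟨continuous_const, hΘ.comp hσcont, fun u => hsph _⟩
      · exact ⟨continuous_const, continuous_const, fun _ => hsph _⟩
      · show Θ (σ 0) = Θ t₀; rw [hσ0]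
      · intro u; exact hkey (σ u) t (hσball u) ht
      · intro u; exact hmem' t ht
      · show (Θ (σ 1)).tau (γ t) = (Θ t).tau (γ t); rw [hσ1]
      · rfl
    show Continuous ((Metric.ball t₀ δ).restrict (fun t : unitInterval =>
          (Quotient.mk (ohatSetoid Ω) ⟨⟨Θ t, hsph t⟩, ⟨γ t, hmem t⟩⟩ : DOmega Ω)))
    rw [heq]
    have hmk : Continuous (Quotient.mk (ohatSetoid Ω)) := continuous_quotient_mk'
    exact hmk.comp (continuous_sigmaMk.comp
      ((hγ.comp continuous_subtype_val).subtype_mk _))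
  · intro P hP t
    exact hP _
end
end
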